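/- Suppose λ satisfies weak hyperbolicity of type (n₁,n₂), and z ∈ ℂ is nonzero. If there exist indices i₁ < i₂ ≤ n₁, positive reals a₁,a₂ with a₁Re(zλ_{i₁}) + a₂Re(zλ_{i₂}) = 0, and indices n₁ < j₁ < j₂ ≤ N, positive reals b₁,b₂ with b₁Re(zλ_{j₁}) + b₂Re(zλ_{j₂}) = 0, then a₁λ_{i₁} + a₂λ_{i₂} = r(b₁λ_{j₁} + b₂λ_{j₂}) for some positive real r leads to a contradiction with weak hyperbolicity; hence such configurations cannot occur simultaneously. -/

import Mathlib

private lemma cross_pos_of_arg (p q : ℂ) (hp : p ≠ 0) (hq : q ≠ 0)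
    (h0 : 0 ≤ p.arg) (h1 : p.arg < q.arg) (h2 : q.arg < Real.pi) :
    0 < p.re * q.im - p.im * q.re := by
  have hpa : (0:ℝ) < ‖p‖ := norm_pos_iff.mpr hp
  have hqa : (0:ℝ) < ‖q‖ := norm_pos_iff.mpr hq
  have hpre : p.re = ‖p‖ * Real.cos p.arg := by
    rw [Complex.cos_arg hp]; field_simp
  have hpim : p.im = ‖p‖ * Real.sin p.arg := by
    rw [Complex.sin_arg]; field_simp
  have hqre : q.re = ‖q‖ * Real.cos q.arg := by
    rw [Complex.cos_arg hq]; field_simp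
  have hqim : q.im = ‖q‖ * Real.sin q.arg := by
    rw [Complex.sin_arg]; field_simp
  have hs : 0 < Real.sin (q.arg - p.arg) :=
    Real.sin_pos_of_pos_of_lt_pi (by linarith) (by linarith)
  rw [Real.sin_sub] at hs
  have key : p.re * q.im - p.im * q.re
      = ‖p‖ * ‖q‖ *
        (Real.sin q.arg * Real.cos p.arg - Real.cos q.arg * Real.sin p.arg) := by
    rw [hpre, hpim, hqre, hqim]; ring
  rw [key]
  exact mul_pos (mul_pos hpa hqa) hs

/-- Under weak hyperbolicity of type (n₁,n₂) and z ≠ 0, one cannot simultaneously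
have indices i₁ < i₂ ≤ n₁ and positive reals a₁, a₂ with a₁Re(zλ_{i₁}) + a₂Re(zλ_{i₂}) = 0,
and indices n₁ < j₁ < j₂ ≤ N and positive reals b₁, b₂ with b₁Re(zλ_{j₁}) + b₂Re(zλ_{j₂}) = 0.
(Indices 0-based: i₁ < i₂ with i₂ < n₁, and n₁ ≤ j₁ < j₂.) -/
theorem no_simultaneous_null_combination (n₁ n₂ N : ℕ) (hN : N = n₁ + n₂)
    (hn₁ : 1 ≤ n₁) (hn₂ : 1 ≤ n₂)
    (lam : Fin N → ℂ) (hne : ∀ j, lam j ≠ 0)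
    (hwh : ∀ i j : Fin N, (i : ℕ) < n₁ → n₁ ≤ (j : ℕ) →
      0 ≤ (lam i).arg ∧ (lam i).arg < (lam j).arg ∧ (lam j).arg < Real.pi)
    (z : ℂ) (hz : z ≠ 0)
    (i₁ i₂ : Fin N) (hi : (i₁ : ℕ) < (i₂ : ℕ)) (hi₂ : (i₂ : ℕ) < n₁)
    (a₁ a₂ : ℝ) (ha₁ : 0 < a₁) (ha₂ : 0 < a₂)
    (hA : a₁ * (z * lam i₁).re + a₂ * (z * lam i₂).re = 0)
    (j₁ j₂ : Fin N) (hj : (j₁ : ℕ) < (j₂ : ℕ)) (hj₁ : n₁ ≤ (j₁ : ℕ))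
    (b₁ b₂ : ℝ) (hb₁ : 0 < b₁) (hb₂ : 0 < b₂)
    (hB : b₁ * (z * lam j₁).re + b₂ * (z * lam j₂).re = 0) :
    False := by
  have hi₁ : (i₁ : ℕ) < n₁ := hi.trans hi₂
  have hj₂ : n₁ ≤ (j₂ : ℕ) := hj₁.trans hj.le
  have c11 : 0 < (lam i₁).re * (lam j₁).im - (lam i₁).im * (lam j₁).re := by
    obtain ⟨h0, h1, h2⟩ := hwh i₁ j₁ hi₁ hj₁
    exact cross_pos_of_arg _ _ (hne i₁) (hne j₁) h0 h1 h2
  have c12 : 0 < (lam i₁).re * (lam j₂).im - (lam i₁).im * (lam j₂).re := by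
    obtain ⟨h0, h1, h2⟩ := hwh i₁ j₂ hi₁ hj₂
    exact cross_pos_of_arg _ _ (hne i₁) (hne j₂) h0 h1 h2
  have c21 : 0 < (lam i₂).re * (lam j₁).im - (lam i₂).im * (lam j₁).re := by
    obtain ⟨h0, h1, h2⟩ := hwh i₂ j₁ hi₂ hj₁
    exact cross_pos_of_arg _ _ (hne i₂) (hne j₁) h0 h1 h2
  have c22 : 0 < (lam i₂).re * (lam j₂).im - (lam i₂).im * (lam j₂).re := by
    obtain ⟨h0, h1, h2⟩ := hwh i₂ j₂ hi₂ hj₂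
    exact cross_pos_of_arg _ _ (hne i₂) (hne j₂) h0 h1 h2
  set Wr := a₁ * (lam i₁).re + a₂ * (lam i₂).re with hWr
  set Wi := a₁ * (lam i₁).im + a₂ * (lam i₂).im with hWi
  set Vr := b₁ * (lam j₁).re + b₂ * (lam j₂).re with hVr
  set Vi := b₁ * (lam j₁).im + b₂ * (lam j₂).im with hVi
  simp only [Complex.mul_re] at hA hB
  have hA' : z.re * Wr - z.im * Wi = 0 := by rw [hWr, hWi]; linarith [hA]
  have hB' : z.re * Vr - z.im * Vi = 0 := by rw [hVr, hVi]; linarith [hB]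
  have hX : 0 < Wr * Vi - Wi * Vr := by
    have h11 := mul_pos (mul_pos ha₁ hb₁) c11
    have h12 := mul_pos (mul_pos ha₁ hb₂) c12
    have h21 := mul_pos (mul_pos ha₂ hb₁) c21
    have h22 := mul_pos (mul_pos ha₂ hb₂) c22
    rw [hWr, hWi, hVr, hVi]
    nlinarith [h11, h12, h21, h22]
  have e1 : z.re * (Wr * Vi - Wi * Vr) = 0 := by linear_combination Vi * hA' - Wi * hB'
  have e2 : z.im * (Wr * Vi - Wi * Vr) = 0 := by linear_combination Vr * hA' - Wr * hB'
  have hzsq : 0 < z.re ^ 2 + z.im ^ 2 := by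
    have h := Complex.normSq_pos.mpr hz
    simp only [Complex.normSq_apply] at h
    nlinarith [h]
  have hzero : (z.re ^ 2 + z.im ^ 2) * (Wr * Vi - Wi * Vr) = 0 := by
    linear_combination z.re * e1 + z.im * e2
  have := mul_pos hzsq hX
  linarith
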